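/- arXiv:1601.02831 — 2 statements merged into one kernel-verified Lean document; each statement's English description precedes it below -/
import Mathlib

section
/- (Main theorem.) Fix a positive definite real k×k matrix Q. An operator f : ℝ^k → ℝ^k is linear if and only if there exist an integer m ≥ 1, a matrix A ∈ ℝ^{m×k}, a linear map b : ℝ^k → ℝ^m, and a linear map c : ℝ^k → ℝ^k such that the system Ax = b(v) is solvable for every v ∈ ℝ^k and, for every v ∈ ℝ^k, f(v) is the unique minimizer of ‖c(v) − x‖_Q² over {x ∈ ℝ^k : Ax = b(v)}. -/
open Matrix

/-- Main theorem: an operator `f : ℝ^k → ℝ^k` is linear if and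
only if it arises from a least square approximation problem with linear
constraints: there are `m ≥ 1`, `A ∈ ℝ^{m×k}` and linear maps `b`, `c` such
that `Ax = b(v)` is always solvable and `f(v)` is the unique minimizer of
`‖c(v) − x‖_Q²` over `{x : Ax = b(v)}`. -/
theorem linear_iff_least_square (k : ℕ)
    (Q : Matrix (Fin k) (Fin k) ℝ) (hQ : Q.PosDef)
    (f : (Fin k → ℝ) → (Fin k → ℝ)) :
    IsLinearMap ℝ f ↔
      ∃ m : ℕ, 0 < m ∧
        ∃ (A : Matrix (Fin m) (Fin k) ℝ)
          (b : (Fin k → ℝ) →ₗ[ℝ] (Fin m → ℝ))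
          (c : (Fin k → ℝ) →ₗ[ℝ] (Fin k → ℝ)),
          (∀ v : Fin k → ℝ, ∃ x : Fin k → ℝ, A.mulVec x = b v) ∧
          (∀ v : Fin k → ℝ,
            A.mulVec (f v) = b v ∧
            (∀ x : Fin k → ℝ, A.mulVec x = b v →
              (c v - f v) ⬝ᵥ Q.mulVec (c v - f v)
                ≤ (c v - x) ⬝ᵥ Q.mulVec (c v - x)) ∧
            (∀ x : Fin k → ℝ,
              (A.mulVec x = b v ∧
                ∀ z : Fin k → ℝ, A.mulVec z = b v →
                  (c v - x) ⬝ᵥ Q.mulVec (c v - x)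
                    ≤ (c v - z) ⬝ᵥ Q.mulVec (c v - z)) → x = f v)) := by
  -- Basic facts about the quadratic form of `Q`.
  have hQpos : ∀ x : Fin k → ℝ, x ≠ 0 → 0 < x ⬝ᵥ Q.mulVec x := by
    intro x hx
    simpa using hQ.dotProduct_mulVec_pos hx
  have hQnn : ∀ x : Fin k → ℝ, 0 ≤ x ⬝ᵥ Q.mulVec x := by
    intro x
    by_cases hx : x = 0
    · simp [hx]
    · exact le_of_lt (hQpos x hx)
  have hzero : ∀ x : Fin k → ℝ, x ⬝ᵥ Q.mulVec x ≤ 0 → x = 0 := by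
    intro x h
    by_contra hx
    exact absurd h (not_le.2 (hQpos x hx))
  have hsymm : ∀ u w : Fin k → ℝ, u ⬝ᵥ Q.mulVec w = w ⬝ᵥ Q.mulVec u := by
    intro u w
    have hQt : Qᵀ = Q := hQ.1
    rw [dotProduct_mulVec, ← mulVec_transpose, hQt, dotProduct_comm]
  -- expansion of the quadratic form
  have key : ∀ (w z : Fin k → ℝ) (t : ℝ),
      (w - t • z) ⬝ᵥ Q.mulVec (w - t • z)
        = w ⬝ᵥ Q.mulVec w - 2 * t * (w ⬝ᵥ Q.mulVec z) + t ^ 2 * (z ⬝ᵥ Q.mulVec z) := by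
    intro w z t
    simp only [mulVec_sub, mulVec_smul, sub_dotProduct, dotProduct_sub,
      smul_dotProduct, dotProduct_smul, smul_eq_mul, hsymm z w]
    ring
  constructor
  · -- forward direction: linear maps arise from least square problems
    intro hf
    refine ⟨1, Nat.one_pos, 0, 0, IsLinearMap.mk' f hf, fun v => ⟨0, by simp⟩, fun v => ?_⟩
    refine ⟨by simp, ?_, ?_⟩
    · intro x hx
      simp only [IsLinearMap.mk'_apply, sub_self, zero_dotProduct]
      exact hQnn _
    · rintro x ⟨hx, hmin⟩
      have h := hmin (f v) (by simp)
      simp only [IsLinearMap.mk'_apply, sub_self, zero_dotProduct] at h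
      have h0 : f v - x = 0 := by simpa using hzero _ h
      exact (sub_eq_zero.mp h0).symm
  · -- backward direction
    rintro ⟨m, hm, A, b, c, hsolv, hmin⟩
    -- orthogonality of the residual to the kernel of `A`
    have ortho : ∀ v z : Fin k → ℝ, A.mulVec z = 0 →
        (c v - f v) ⬝ᵥ Q.mulVec z = 0 := by
      intro v z hz
      by_cases hz0 : z = 0
      · simp [hz0]
      have hnzpos : 0 < z ⬝ᵥ Q.mulVec z := hQpos z hz0
      set s := (c v - f v) ⬝ᵥ Q.mulVec z with hs
      set nz := z ⬝ᵥ Q.mulVec z with hnz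
      have hnz0 : nz ≠ 0 := ne_of_gt hnzpos
      have hx : A.mulVec (f v + (s / nz) • z) = b v := by
        rw [mulVec_add, mulVec_smul, hz, (hmin v).1]
        simp
      have h := (hmin v).2.1 (f v + (s / nz) • z) hx
      have hrw : c v - (f v + (s / nz) • z) = (c v - f v) - (s / nz) • z := by
        abel
      rw [hrw, key (c v - f v) z (s / nz)] at h
      have h0 : (0 : ℝ) ≤ -2 * (s / nz) * s + (s / nz) ^ 2 * nz := by linarith
      have e2 : s ^ 2 = -(-2 * (s / nz) * s + (s / nz) ^ 2 * nz) * nz := by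
        field_simp
        ring
      have hs2 : s ^ 2 ≤ 0 := by
        rw [e2]
        exact mul_nonpos_of_nonpos_of_nonneg (by linarith) (le_of_lt hnzpos)
      exact pow_eq_zero_iff two_ne_zero |>.mp (le_antisymm hs2 (sq_nonneg s))
    -- a point satisfying the constraint and orthogonality is the minimizer
    have main : ∀ v x : Fin k → ℝ, A.mulVec x = b v →
        (∀ z : Fin k → ℝ, A.mulVec z = 0 → (c v - x) ⬝ᵥ Q.mulVec z = 0) → x = f v := by
      intro v x hx hor
      apply (hmin v).2.2 x
      refine ⟨hx, fun z hz => ?_⟩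
      have hd : A.mulVec (z - x) = 0 := by
        rw [mulVec_sub, hz, hx, sub_self]
      have hrw : c v - z = (c v - x) - (1 : ℝ) • (z - x) := by
        rw [one_smul]; abel
      rw [hrw, key (c v - x) (z - x) 1, hor _ hd]
      have := hQnn (z - x)
      nlinarith
    constructor
    · intro u v
      symm
      apply main (u + v) (f u + f v)
      · rw [mulVec_add, (hmin u).1, (hmin v).1, map_add]
      · intro z hz
        have hrw : c (u + v) - (f u + f v) = (c u - f u) + (c v - f v) := by
          rw [map_add]; abel
        rw [hrw, add_dotProduct, ortho u z hz, ortho v z hz, add_zero]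
    · intro r v
      symm
      apply main (r • v) (r • f v)
      · rw [mulVec_smul, (hmin v).1, b.map_smul]
      · intro z hz
        have hrw : c (r • v) - r • f v = r • (c v - f v) := by
          rw [c.map_smul, smul_sub]
        rw [hrw, smul_dotProduct, ortho v z hz, smul_eq_mul, mul_zero]
end

section
/- (Theorem on regular weights, optimality.) Let n ≥ 1, let Q be a regular, positive definite real n×n matrix with diagonal entries q and off-diagonal entries p where q > p, let c ∈ ℝ^n and g ∈ ℝ. Define C = ∑_{i=1}^{n} c_i, z* = (2(q + (n−1)p)g − C)/n, and x*_i = (c_i + z* − 2pg)/(2q − 2p) for each i. Then x* is the unique optimal solution of the problem: minimize xᵀQx − cᵀx over all x ∈ ℝ^n with ∑_{i=1}^{n} x_i = g; that is, ∑_i x*_i = g and x*ᵀQx* − cᵀx* < xᵀQx − cᵀx for every x ≠ x* with ∑_i x_i = g. -/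
open Matrix

/-- Theorem on regular weights, optimality: if moreover `Q` is
positive definite (with `q > p`), then `x*` is the unique optimal solution of
`min xᵀQx − cᵀx  s.t.  ∑ᵢ xᵢ = g`. -/
theorem regular_unique_optimal_solution (n : ℕ) (hn : 1 ≤ n)
    (Q : Matrix (Fin n) (Fin n) ℝ) (q p : ℝ)
    (hq : ∀ i, Q i i = q) (hp : ∀ i j, i ≠ j → Q i j = p)
    (hQ : Q.PosDef) (hqp : p < q)
    (c : Fin n → ℝ) (g : ℝ) (C zs : ℝ) (xs : Fin n → ℝ)
    (hC : C = ∑ i, c i)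
    (hz : zs = (2 * (q + ((n : ℝ) - 1) * p) * g - C) / (n : ℝ))
    (hx : ∀ i, xs i = (c i + zs - 2 * p * g) / (2 * q - 2 * p)) :
    (∑ i, xs i = g) ∧
      ∀ x : Fin n → ℝ, (∑ i, x i) = g → x ≠ xs →
        xs ⬝ᵥ Q.mulVec xs - c ⬝ᵥ xs < x ⬝ᵥ Q.mulVec x - c ⬝ᵥ x := by
  have hn0 : (n : ℝ) ≠ 0 := Nat.cast_ne_zero.mpr (by omega)
  have hne : (2 * q - 2 * p) ≠ 0 := by nlinarith
  have hqp0 : q - p ≠ 0 := sub_ne_zero.mpr hqp.ne'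
  have hc : ∀ i, c i = (2 * q - 2 * p) * xs i - zs + 2 * p * g := by
    intro i
    have := hx i
    field_simp at this
    linarith
  -- sum of xs equals g
  have hsumxs : ∑ i, xs i = g := by
    have h1 : ∑ i, xs i = (∑ i, (c i + zs - 2 * p * g)) / (2 * q - 2 * p) := by
      rw [Finset.sum_div]
      exact Finset.sum_congr rfl fun i _ => hx i
    rw [h1, Finset.sum_sub_distrib, Finset.sum_add_distrib, ← hC,
      Finset.sum_const, Finset.sum_const, Finset.card_univ, Fintype.card_fin]
    rw [hz] at *
    simp only [nsmul_eq_mul]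
    field_simp
    ring
  refine ⟨hsumxs, fun x hsum hnex => ?_⟩
  -- quadratic form formula
  have hquad : ∀ y : Fin n → ℝ,
      y ⬝ᵥ Q.mulVec y = (q - p) * (∑ i, y i ^ 2) + p * (∑ i, y i) ^ 2 := by
    intro y
    have hmv : ∀ i, Q.mulVec y i = (q - p) * y i + p * ∑ j, y j := by
      intro i
      have : ∀ j, Q i j * y j = (if i = j then (q - p) * y j else 0) + p * y j := by
        intro j
        by_cases h : i = j
        · subst h; simp [hq i]; ring
        · simp [h, hp i j h]
      simp only [Matrix.mulVec, dotProduct]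
      rw [Finset.sum_congr rfl fun j _ => this j, Finset.sum_add_distrib,
        Finset.sum_ite_eq, ← Finset.mul_sum]
      simp
    simp only [dotProduct]
    rw [Finset.sum_congr rfl fun i _ => by rw [hmv i]]
    have : ∀ i, y i * ((q - p) * y i + p * ∑ j, y j)
        = (q - p) * y i ^ 2 + p * ((∑ j, y j) * y i) := by intro i; ring
    rw [Finset.sum_congr rfl fun i _ => this i, Finset.sum_add_distrib,
      ← Finset.mul_sum, ← Finset.mul_sum, ← Finset.mul_sum]
    ring
  -- c-dot sums
  have hcdot : ∀ y : Fin n → ℝ, (∑ i, y i) = g →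
      ∑ i, c i * y i = (2 * q - 2 * p) * (∑ i, xs i * y i) - (zs - 2 * p * g) * g := by
    intro y hy
    have : ∀ i, c i * y i
        = (2 * q - 2 * p) * (xs i * y i) - (zs - 2 * p * g) * y i := by
      intro i; rw [hc i]; ring
    rw [Finset.sum_congr rfl fun i _ => this i, Finset.sum_sub_distrib,
      ← Finset.mul_sum, ← Finset.mul_sum, hy]
  -- key identity
  have hsq : ∑ i, (x i - xs i) ^ 2
      = (∑ i, x i ^ 2) - 2 * (∑ i, xs i * x i) + ∑ i, xs i ^ 2 := by
    have : ∀ i, (x i - xs i) ^ 2 = x i ^ 2 - 2 * (xs i * x i) + xs i ^ 2 := by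
      intro i; ring
    rw [Finset.sum_congr rfl fun i _ => this i, Finset.sum_add_distrib,
      Finset.sum_sub_distrib, ← Finset.mul_sum]
  have key : (x ⬝ᵥ Q.mulVec x - c ⬝ᵥ x) - (xs ⬝ᵥ Q.mulVec xs - c ⬝ᵥ xs)
      = (q - p) * ∑ i, (x i - xs i) ^ 2 := by
    have hcx := hcdot x hsum
    have hcxs := hcdot xs hsumxs
    have hxsxs : ∑ i, xs i * xs i = ∑ i, xs i ^ 2 :=
      Finset.sum_congr rfl fun i _ => (sq (xs i)).symm
    rw [hquad x, hquad xs, hsum, hsumxs]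
    simp only [dotProduct]
    rw [hcx, hcxs, hxsxs, hsq]
    ring
  have hpos : 0 < ∑ i, (x i - xs i) ^ 2 := by
    obtain ⟨i, hi⟩ := Function.ne_iff.mp hnex
    apply Finset.sum_pos' (fun j _ => sq_nonneg _)
    exact ⟨i, Finset.mem_univ i, by have := sub_ne_zero.mpr hi; positivity⟩
  nlinarith [mul_pos (sub_pos.mpr hqp) hpos]
end
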